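/- Let r ≥ 1 be an integer and τ ∈ ℂ with Im τ > 0. The set of entire functions g : ℂ → ℂ (differentiable everywhere in the complex sense) satisfying g(z+1) = g(z) and g(z+τ) = exp(−(2r+1)·π·i·(τ + 2z))·g(z) for all z ∈ ℂ is a complex vector subspace of the space of functions ℂ → ℂ, and its dimension over ℂ equals 2r+1. (This is the dimension count dim ℋ_{r+1/2}(j,δ) = 2r+1 for the space of holomorphic sections of L^r ⊗ L^{1/2} ⊗ δ over the torus.) -/

import Mathlib

open Complex MeasureTheory Set Filter Function

noncomputable section Statement8Aux

/-- Fourier coefficient of `g` restricted to `[0,1]`. -/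
def s8fc (g : ℂ → ℂ) (k : ℤ) : ℂ :=
  ∫ t in (0:ℝ)..1, g t * Complex.exp (-(2 * Real.pi * I * k * t))

/-- basic integral of exponentials over a period -/
lemma s8_int_exp (N : ℤ) :
    (∫ t in (0:ℝ)..1, Complex.exp (2 * Real.pi * I * N * t)) = if N = 0 then 1 else 0 := by
  rcases eq_or_ne N 0 with h | h
  · simp [h]
  · have hc : (2 * (Real.pi : ℂ) * I * N) ≠ 0 := by
      simp [Real.pi_ne_zero, Complex.I_ne_zero, h]
    rw [if_neg h]
    have : (∫ t in (0:ℝ)..1, Complex.exp (2 * Real.pi * I * N * t)) =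
        ∫ t in (0:ℝ)..1, Complex.exp ((2 * Real.pi * I * N) * t) := by
      refine intervalIntegral.integral_congr fun t _ => by ring_nf
    rw [this, integral_exp_mul_complex hc]
    have h1 : Complex.exp (2 * (Real.pi:ℂ) * I * N * (1:ℝ)) = 1 := by
      rw [show (2 * (Real.pi:ℂ) * I * N * (1:ℝ)) = N * (2 * Real.pi * I) by push_cast; ring]
      exact Complex.exp_int_mul_two_pi_mul_I N
    have h0 : Complex.exp (2 * (Real.pi:ℂ) * I * N * (0:ℝ)) = 1 := by
      norm_num
    rw [h1, h0]
    simp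

lemma s8fc_add (g h : ℂ → ℂ) (hg : Continuous g) (hh : Continuous h) (k : ℤ) :
    s8fc (g + h) k = s8fc g k + s8fc h k := by
  rw [s8fc, s8fc, s8fc, ← intervalIntegral.integral_add]
  · exact intervalIntegral.integral_congr fun t _ => by simp [add_mul]
  · exact (((hg.comp Complex.continuous_ofReal).mul (by fun_prop)).intervalIntegrable 0 1)
  · exact (((hh.comp Complex.continuous_ofReal).mul (by fun_prop)).intervalIntegrable 0 1)

lemma s8fc_smul (c : ℂ) (g : ℂ → ℂ) (k : ℤ) : s8fc (c • g) k = c * s8fc g k := by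
  rw [s8fc, s8fc, ← intervalIntegral.integral_const_mul]
  exact intervalIntegral.integral_congr fun t _ => by simp [mul_assoc]

/-- the `m`-th term of the theta series with characteristic `j`. -/
def s8term (τ : ℂ) (n : ℕ) (j m : ℤ) (z : ℂ) : ℂ :=
  Complex.exp (Real.pi * I * τ * (m * n + j) ^ 2 / n + 2 * Real.pi * I * (m * n + j) * z)

/-- theta function with characteristic `j`. -/
def s8theta (τ : ℂ) (n : ℕ) (j : ℤ) (z : ℂ) : ℂ :=
  Complex.exp (Real.pi * I * τ * j ^ 2 / n + 2 * Real.pi * I * j * z) *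
    jacobiTheta₂ (n * z + j * τ) (n * τ)

section main
variable {τ : ℂ} {n : ℕ} (hτ : 0 < τ.im) (hn : 0 < n)

include hτ hn in
lemma s8_im_pos : 0 < ((n : ℂ) * τ).im := by
  simp only [Complex.mul_im, Complex.natCast_re, Complex.natCast_im, zero_mul, add_zero]
  positivity

include hτ hn in
lemma s8_hasSum_theta (j : ℤ) (z : ℂ) :
    HasSum (fun m : ℤ => s8term τ n j m z) (s8theta τ n j z) := by
  have h1 : 0 < ((n : ℂ) * τ).im := s8_im_pos hτ hn
  have h2 := (hasSum_jacobiTheta₂_term ((n : ℂ) * z + j * τ) h1).mul_left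
    (Complex.exp (Real.pi * I * τ * j ^ 2 / n + 2 * Real.pi * I * j * z))
  refine h2.congr_fun fun m => ?_
  rw [jacobiTheta₂_term, s8term, ← Complex.exp_add]
  congr 1
  have hn' : (n : ℂ) ≠ 0 := Nat.cast_ne_zero.mpr hn.ne'
  field_simp
  ring

lemma s8_norm_term (j m : ℤ) (t : ℝ) :
    ‖s8term τ n j m t‖ = Real.exp (-(Real.pi * τ.im * ((m * n + j : ℤ) : ℝ) ^ 2 / n)) := by
  rw [s8term, Complex.norm_exp]
  have h : (Real.pi * I * τ * ((m:ℂ) * n + j) ^ 2 / n + 2 * Real.pi * I * ((m:ℂ) * n + j) * (t:ℂ)) =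
      ((Real.pi * ((m * n + j : ℤ):ℝ) ^ 2 / n : ℝ) : ℂ) * (τ * I) +
      ((2 * Real.pi * ((m * n + j : ℤ):ℝ) * t : ℝ) : ℂ) * I := by
    push_cast
    ring
  rw [h, Complex.add_re, Complex.re_ofReal_mul, Complex.re_ofReal_mul, Complex.mul_re,
    Complex.I_re, Complex.I_im]
  simp
  ring

include hτ hn in
lemma s8_summable_bound (j : ℤ) (hj : 0 ≤ j) (hj' : j < n) :
    Summable fun m : ℤ => Real.exp (-(Real.pi * τ.im * ((m * n + j : ℤ) : ℝ) ^ 2 / n)) := by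
  have hb := summable_pow_mul_jacobiTheta₂_term_bound 0 (T := τ.im / n)
    (div_pos hτ (by exact_mod_cast hn)) 0
  simp only [pow_zero, one_mul, mul_zero, zero_mul, sub_zero] at hb
  refine hb.of_nonneg_of_le (fun m => (Real.exp_pos _).le) fun m => ?_
  rw [Real.exp_le_exp]
  have hn1 : (1:ℤ) ≤ n := by exact_mod_cast hn
  have key : (m:ℤ)^2 ≤ (m * n + j)^2 := by
    rcases le_or_gt 0 m with hm | hm
    · have h1 : m ≤ m * n + j := by nlinarith
      exact pow_le_pow_left₀ hm h1 2
    · have hm1 : m ≤ -1 := by omega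
      have h2 : m * (n - 1) ≤ (-1) * (n - 1) :=
        mul_le_mul_of_nonneg_right hm1 (by omega)
      have h1 : m * n + j ≤ m := by nlinarith
      have h3 := pow_le_pow_left₀ (by omega : (0:ℤ) ≤ -m) (by omega : -m ≤ -(m * n + j)) 2
      calc m ^ 2 = (-m) ^ 2 := by ring
        _ ≤ (-(m * n + j)) ^ 2 := h3
        _ = (m * n + j) ^ 2 := by ring
  have keyR : ((m:ℝ))^2 ≤ (((m * n + j : ℤ) : ℝ))^2 := by exact_mod_cast key
  have hn' : (0:ℝ) < n := by exact_mod_cast hn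
  have hπ := Real.pi_pos
  rw [show -Real.pi * (τ.im / n * (m:ℝ)^2) = -(Real.pi * τ.im * (m:ℝ)^2 / n) by ring]
  apply neg_le_neg
  gcongr

include hτ hn in
lemma s8_fc_theta (j k : ℤ) (hj : 0 ≤ j) (hj' : j < n) (hk : 0 ≤ k) (hk' : k < n) :
    s8fc (s8theta τ n j) k =
      if k = j then Complex.exp (Real.pi * I * τ * j ^ 2 / n) else 0 := by
  have hn1 : (1:ℤ) ≤ n := by exact_mod_cast hn
  set F : ℤ → ℝ → ℂ :=
    fun m t => s8term τ n j m t * Complex.exp (-(2 * Real.pi * I * k * t)) with hF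
  have hcont : ∀ m, Continuous (F m) := by
    intro m
    simp only [hF, s8term]
    fun_prop
  have hnormF : ∀ (m : ℤ) (t : ℝ),
      ‖F m t‖ = Real.exp (-(Real.pi * τ.im * ((m * n + j : ℤ) : ℝ) ^ 2 / n)) := by
    intro m t
    rw [hF]
    simp only
    rw [norm_mul, s8_norm_term, show -(2 * (Real.pi:ℂ) * I * k * t) =
      ((-(2 * Real.pi * k * t) : ℝ) : ℂ) * I by push_cast; ring]
    rw [Complex.norm_exp_ofReal_mul_I, mul_one]
  have h1 : s8fc (s8theta τ n j) k = ∫ t in (0:ℝ)..1, ∑' m : ℤ, F m t := by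
    rw [s8fc]
    refine intervalIntegral.integral_congr fun t _ => ?_
    rw [← (s8_hasSum_theta hτ hn j t).tsum_eq]
    exact (tsum_mul_right).symm
  have h_int : ∀ m : ℤ, Integrable (F m) (volume.restrict (Ioc (0:ℝ) 1)) :=
    fun m => (hcont m).integrableOn_Ioc
  have h_sum : Summable fun m : ℤ => ∫ t in Ioc (0:ℝ) 1, ‖F m t‖ := by
    have he : (fun m : ℤ => ∫ t in Ioc (0:ℝ) 1, ‖F m t‖) =
        fun m : ℤ => Real.exp (-(Real.pi * τ.im * ((m * n + j : ℤ) : ℝ) ^ 2 / n)) := by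
      funext m
      rw [MeasureTheory.setIntegral_congr_fun measurableSet_Ioc fun t _ => hnormF m t]
      simp [Real.volume_Ioc]
    rw [he]
    exact s8_summable_bound hτ hn j hj hj'
  have h2 : (∫ t in (0:ℝ)..1, ∑' m : ℤ, F m t) = ∑' m : ℤ, ∫ t in (0:ℝ)..1, F m t := by
    rw [intervalIntegral.integral_of_le zero_le_one,
      ← MeasureTheory.integral_tsum_of_summable_integral_norm h_int h_sum]
    exact tsum_congr fun m => (intervalIntegral.integral_of_le zero_le_one).symm
  have h3 : ∀ m : ℤ, (∫ t in (0:ℝ)..1, F m t) =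
      (if m * n + j - k = 0
        then Complex.exp (Real.pi * I * τ * ((m:ℂ) * n + j) ^ 2 / n) else 0) := by
    intro m
    have heq : ∀ t : ℝ, F m t =
        Complex.exp (Real.pi * I * τ * ((m:ℂ) * n + j) ^ 2 / n) *
          Complex.exp (2 * Real.pi * I * ((m * n + j - k : ℤ) : ℂ) * t) := by
      intro t
      rw [hF]
      simp only [s8term]
      rw [← Complex.exp_add, ← Complex.exp_add]
      congr 1
      push_cast
      ring
    rw [intervalIntegral.integral_congr fun t _ => heq t,
      intervalIntegral.integral_const_mul, s8_int_exp (m * n + j - k)]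
    split <;> simp
  rw [h1, h2, tsum_congr h3]
  rcases eq_or_ne k j with rfl | hkj
  · rw [if_pos rfl, tsum_eq_single 0]
    · rw [if_pos (by ring)]
      norm_num
    · intro b hb
      rw [if_neg]
      intro hc
      have hb0 : b * (n:ℤ) = 0 := by omega
      rcases mul_eq_zero.mp hb0 with h | h
      · exact hb h
      · omega
  · rw [if_neg hkj]
    have hz : ∀ m : ℤ, m * n + j - k ≠ 0 := by
      intro m hc
      rcases lt_trichotomy m 0 with h | h | h
      · have : m ≤ -1 := by omega
        nlinarith
      · subst h
        omega
      · have : 1 ≤ m := by omega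
        nlinarith
    rw [tsum_congr fun m => if_neg (hz m)]
    exact tsum_zero

include hτ hn in
lemma s8_theta_differentiable (j : ℤ) : Differentiable ℂ (s8theta τ n j) := by
  have h1 : 0 < ((n : ℂ) * τ).im := s8_im_pos hτ hn
  have h2 : Differentiable ℂ fun z : ℂ => jacobiTheta₂ ((n:ℂ) * z + j * τ) ((n:ℂ) * τ) := by
    intro z
    exact (differentiableAt_jacobiTheta₂_fst ((n:ℂ) * z + j * τ) h1).comp (f := fun w : ℂ => (n:ℂ) * w + j * τ) z (by fun_prop)
  have h3 : Differentiable ℂ fun z : ℂ =>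
      Complex.exp (Real.pi * I * τ * j ^ 2 / n + 2 * Real.pi * I * j * z) := by fun_prop
  exact h3.mul h2

lemma s8_jacobiTheta₂_add_nat (w σ : ℂ) (k : ℕ) :
    jacobiTheta₂ (w + k) σ = jacobiTheta₂ w σ := by
  induction k with
  | zero => simp
  | succ k ih =>
      have : w + (k + 1 : ℕ) = (w + k) + 1 := by push_cast; ring
      rw [this, jacobiTheta₂_add_left, ih]

lemma s8_theta_periodic (j : ℤ) (z : ℂ) : s8theta τ n j (z + 1) = s8theta τ n j z := by
  rw [s8theta, s8theta, show (n:ℂ) * (z + 1) + j * τ = ((n:ℂ) * z + j * τ) + (n:ℕ) by push_cast; ring,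
    s8_jacobiTheta₂_add_nat]
  congr 1
  rw [show Real.pi * I * τ * (j:ℂ) ^ 2 / n + 2 * Real.pi * I * j * (z + 1) =
    (Real.pi * I * τ * j ^ 2 / n + 2 * Real.pi * I * j * z) + j * (2 * Real.pi * I) by ring]
  rw [Complex.exp_add, Complex.exp_int_mul_two_pi_mul_I, mul_one]

lemma s8_theta_quasiperiodic (j : ℤ) (z : ℂ) :
    s8theta τ n j (z + τ) =
      Complex.exp (-((n : ℂ) * Real.pi * I * (τ + 2 * z))) * s8theta τ n j z := by
  rw [s8theta, s8theta,
    show (n:ℂ) * (z + τ) + j * τ = ((n:ℂ) * z + j * τ) + (n:ℂ) * τ by ring,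
    jacobiTheta₂_add_left']
  rw [← mul_assoc, ← mul_assoc]
  congr 1
  rw [← Complex.exp_add, ← Complex.exp_add]
  congr 1
  ring

/-- Constancy of the Fourier-coefficient contour integral in the height of the line. -/
lemma s8_vert (g : ℂ → ℂ) (hg : Differentiable ℂ g) (hper : ∀ z, g (z + 1) = g z)
    (k : ℤ) (y : ℝ) :
    (∫ t in (0:ℝ)..1, g (t + y * I) * Complex.exp (-(2 * Real.pi * I * k * (t + y * I))))
      = s8fc g k := by
  set G : ℂ → ℂ := fun z => g z * Complex.exp (-(2 * Real.pi * I * k * z)) with hG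
  have hGd : Differentiable ℂ G := by
    apply hg.mul
    fun_prop
  have hGper : ∀ z, G (z + 1) = G z := by
    intro z
    rw [hG]
    simp only
    rw [hper z, show -(2 * (Real.pi:ℂ) * I * k * (z + 1)) =
      -(2 * Real.pi * I * k * z) + ((-k : ℤ) : ℂ) * (2 * Real.pi * I) by push_cast; ring,
      Complex.exp_add, Complex.exp_int_mul_two_pi_mul_I, mul_one]
  have hrect := Complex.integral_boundary_rect_eq_zero_of_differentiableOn G 0 (1 + y * I)
    (hGd.differentiableOn)
  simp only [Complex.zero_re, Complex.zero_im, Complex.add_re, Complex.one_re,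
    Complex.mul_re, Complex.ofReal_re, Complex.I_re, Complex.ofReal_im, Complex.I_im,
    Complex.add_im, Complex.one_im, Complex.mul_im] at hrect
  norm_num at hrect
  have hvert : (∫ t in (0:ℝ)..y, G (1 + t * I)) = ∫ t in (0:ℝ)..y, G (t * I) := by
    refine intervalIntegral.integral_congr fun t _ => ?_
    rw [show (1:ℂ) + t * I = (t : ℂ) * I + 1 by ring]
    exact hGper _
  rw [hvert] at hrect
  have h0 : (∫ t in (0:ℝ)..1, G t) = s8fc g k := rfl
  have h1 : (∫ t in (0:ℝ)..1, g (t + y * I) * Complex.exp (-(2 * Real.pi * I * k * (t + y * I))))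
      = ∫ x in (0:ℝ)..1, G (x + y * I) := rfl
  rw [h1, ← h0]
  linear_combination -hrect

include hτ in
lemma s8_step (g : ℂ → ℂ) (hg : Differentiable ℂ g) (hper : ∀ z, g (z + 1) = g z)
    (hqp : ∀ z, g (z + τ) = Complex.exp (-((n : ℂ) * Real.pi * I * (τ + 2 * z))) * g z)
    (k : ℤ) :
    s8fc g k = Complex.exp (-(Real.pi * I * n * τ) - 2 * Real.pi * I * k * τ) *
      s8fc g (k + n) := by
  rw [← s8_vert g hg hper k τ.im]
  set f : ℝ → ℂ := fun t =>
    g (↑t + τ.im * I) * Complex.exp (-(2 * Real.pi * I * k * (↑t + τ.im * I))) with hf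
  have hper1 : Function.Periodic f 1 := by
    intro t
    rw [hf]
    simp only
    have harg : ((t + 1 : ℝ) : ℂ) + τ.im * I = (↑t + τ.im * I) + 1 := by push_cast; ring
    rw [harg, hper]
    congr 1
    rw [show -(2 * (Real.pi:ℂ) * I * k * ((↑t + τ.im * I) + 1)) =
      -(2 * Real.pi * I * k * (↑t + τ.im * I)) + ((-k : ℤ) : ℂ) * (2 * Real.pi * I) by
        push_cast; ring,
      Complex.exp_add, Complex.exp_int_mul_two_pi_mul_I, mul_one]
  have e1 : (∫ t in (0:ℝ)..1, f t) = ∫ t in (0:ℝ)..1, f (t + τ.re) := by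
    rw [intervalIntegral.integral_comp_add_right f τ.re]
    have h := hper1.intervalIntegral_add_eq 0 τ.re
    rw [zero_add] at h
    rw [h, add_comm τ.re 1, zero_add]
  have e2 : ∀ t : ℝ, f (t + τ.re) =
      Complex.exp (-(Real.pi * I * n * τ) - 2 * Real.pi * I * k * τ) *
        (g t * Complex.exp (-(2 * Real.pi * I * ((k + (n:ℤ) : ℤ) : ℂ) * t))) := by
    intro t
    rw [hf]
    simp only
    have harg : ((t + τ.re : ℝ) : ℂ) + τ.im * I = ↑t + τ := by
      push_cast
      rw [add_assoc, Complex.re_add_im]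
    rw [harg, hqp]
    rw [show (Complex.exp (-((n:ℂ) * Real.pi * I * (τ + 2 * ↑t))) * g ↑t) *
        Complex.exp (-(2 * Real.pi * I * k * (↑t + τ))) =
      (Complex.exp (-((n:ℂ) * Real.pi * I * (τ + 2 * ↑t))) *
        Complex.exp (-(2 * Real.pi * I * k * (↑t + τ)))) * g ↑t by ring,
      ← Complex.exp_add]
    rw [show -((n:ℂ) * Real.pi * I * (τ + 2 * ↑t)) + -(2 * Real.pi * I * k * (↑t + τ)) =
      (-(Real.pi * I * n * τ) - 2 * Real.pi * I * k * τ) +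
        -(2 * Real.pi * I * ((k + (n:ℤ) : ℤ) : ℂ) * t) by push_cast; ring,
      Complex.exp_add]
    ring
  calc (∫ t in (0:ℝ)..1, f t) = ∫ t in (0:ℝ)..1, f (t + τ.re) := e1
    _ = ∫ t in (0:ℝ)..1,
        Complex.exp (-(Real.pi * I * n * τ) - 2 * Real.pi * I * k * τ) *
          (g t * Complex.exp (-(2 * Real.pi * I * ((k + (n:ℤ) : ℤ) : ℂ) * t))) :=
      intervalIntegral.integral_congr fun t _ => e2 t
    _ = Complex.exp (-(Real.pi * I * n * τ) - 2 * Real.pi * I * k * τ) * s8fc g (k + n) := by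
      rw [intervalIntegral.integral_const_mul]
      rfl

lemma s8_zero_of_fc_zero (g : ℂ → ℂ) (hg : Differentiable ℂ g) (hper : ∀ z, g (z + 1) = g z)
    (h0 : ∀ k : ℤ, s8fc g k = 0) : g = 0 := by
  haveI : Fact (0 < (1:ℝ)) := ⟨one_pos⟩
  set f : ℝ → ℂ := fun t => g t with hfdef
  have hcont : Continuous f := hg.continuous.comp Complex.continuous_ofReal
  have hend : f 0 = f 1 := by
    rw [hfdef]
    simp only
    rw [show ((1:ℝ):ℂ) = (0:ℂ) + 1 by norm_num, hper]
    norm_num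
  set F : C(AddCircle (1:ℝ), ℂ) :=
    ⟨AddCircle.liftIco 1 0 f, AddCircle.liftIco_zero_continuous hend hcont.continuousOn⟩ with hFdef
  have hFcoeff : ∀ k : ℤ, fourierCoeff (⇑F) k = s8fc g k := by
    intro k
    have h1 : (⇑F) = AddCircle.liftIco 1 0 f := rfl
    rw [h1, fourierCoeff_liftIco_eq, fourierCoeffOn_eq_integral]
    simp only [zero_add, sub_zero, one_smul, Complex.ofReal_one, div_one]
    rw [s8fc]
    refine intervalIntegral.integral_congr fun t _ => ?_
    rw [fourier_coe_apply, smul_eq_mul, mul_comm]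
    congr 2
    push_cast
    ring
  have hsummable : Summable (fourierCoeff (⇑F)) := by
    have he : fourierCoeff (⇑F) = fun _ => 0 :=
      funext fun k => by rw [hFcoeff, h0]
    rw [he]
    exact summable_zero
  have hFzero : ∀ x, F x = 0 := by
    intro x
    have hs := has_pointwise_sum_fourier_series_of_summable hsummable x
    have he : (fun i => fourierCoeff (⇑F) i • fourier i x) =
        fun _ => (0:ℂ) := funext fun i => by rw [hFcoeff, h0, zero_smul]
    rw [he] at hs
    exact (hs.unique hasSum_zero)
  have hIco : ∀ t : ℝ, t ∈ Ico (0:ℝ) 1 → g t = 0 := by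
    intro t ht
    have hx := hFzero ↑t
    rwa [hFdef, ContinuousMap.coe_mk, AddCircle.liftIco_zero_coe_apply ht] at hx
  have han : AnalyticOnNhd ℂ g univ := hg.differentiableOn.analyticOnNhd isOpen_univ
  have hfreq : ∃ᶠ z in nhdsWithin (0:ℂ) {z | z ≠ 0}, g z = 0 := by
    have ht0 : Tendsto (fun m : ℕ => (1 / (m + 2) : ℝ)) atTop (nhds 0) := by
      have h2 := (tendsto_one_div_add_atTop_nhds_zero_nat (𝕜 := ℝ)).comp
        (tendsto_add_atTop_nat 1)
      refine h2.congr fun m => ?_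
      simp only [Function.comp]
      push_cast
      ring_nf
    have htend : Tendsto (fun m : ℕ => ((1 / (m + 2) : ℝ) : ℂ)) atTop
        (nhdsWithin (0:ℂ) {z | z ≠ 0}) := by
      apply tendsto_nhdsWithin_of_tendsto_nhds_of_eventually_within
      · have h3 := (Complex.continuous_ofReal.tendsto 0).comp ht0
        simp only [Function.comp, Complex.ofReal_zero] at h3
        exact h3.congr fun m => by norm_num
      · refine Filter.Eventually.of_forall fun m => ?_
        simp only [Set.mem_setOf_eq, ne_eq, Complex.ofReal_eq_zero]
        positivity
    refine htend.frequently (Filter.Frequently.of_forall fun m => ?_)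
    refine hIco _ ⟨by positivity, ?_⟩
    rw [div_lt_one (by positivity)]
    linarith [Nat.cast_nonneg (α := ℝ) m]
  have heq := han.eqOn_zero_of_preconnected_of_frequently_eq_zero isPreconnected_univ
    (mem_univ (0:ℂ)) hfreq
  funext z
  exact heq (mem_univ z)

end main

end Statement8Aux

theorem statement8 (r : ℕ) (hr : 1 ≤ r) (τ : ℂ) (hτ : 0 < τ.im) :
    ∃ W : Submodule ℂ (ℂ → ℂ),
      ((W : Set (ℂ → ℂ)) =
        {g : ℂ → ℂ | Differentiable ℂ g ∧ (∀ z : ℂ, g (z + 1) = g z) ∧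
          ∀ z : ℂ, g (z + τ) =
            Complex.exp (-((2 * (r : ℂ) + 1) * Real.pi * Complex.I * (τ + 2 * z))) * g z})
      ∧ Module.finrank ℂ W = 2 * r + 1 := by
  classical
  set n : ℕ := 2 * r + 1 with hn_def
  have hn : 0 < n := by omega
  have hcast : ((n : ℕ) : ℂ) = 2 * (r : ℂ) + 1 := by rw [hn_def]; push_cast; ring
  set W : Submodule ℂ (ℂ → ℂ) :=
    { carrier := {g : ℂ → ℂ | Differentiable ℂ g ∧ (∀ z : ℂ, g (z + 1) = g z) ∧
        ∀ z : ℂ, g (z + τ) =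
          Complex.exp (-((2 * (r : ℂ) + 1) * Real.pi * Complex.I * (τ + 2 * z))) * g z}
      add_mem' := by
        rintro a b ⟨ha1, ha2, ha3⟩ ⟨hb1, hb2, hb3⟩
        refine ⟨ha1.add hb1, fun z => ?_, fun z => ?_⟩
        · simp only [Pi.add_apply, ha2 z, hb2 z]
        · simp only [Pi.add_apply, ha3 z, hb3 z]
          ring
      zero_mem' := by
        refine ⟨differentiable_const 0, fun z => rfl, fun z => by simp⟩
      smul_mem' := by
        rintro c a ⟨ha1, ha2, ha3⟩
        refine ⟨ha1.const_smul c, fun z => ?_, fun z => ?_⟩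
        · simp only [Pi.smul_apply, ha2 z]
        · simp only [Pi.smul_apply, ha3 z, smul_eq_mul]
          ring } with hW_def
  refine ⟨W, rfl, ?_⟩
  have hmem : ∀ g : W, Differentiable ℂ (g : ℂ → ℂ) ∧
      (∀ z : ℂ, (g : ℂ → ℂ) (z + 1) = (g : ℂ → ℂ) z) ∧
      ∀ z : ℂ, (g : ℂ → ℂ) (z + τ) =
        Complex.exp (-((n : ℂ) * Real.pi * Complex.I * (τ + 2 * z))) * (g : ℂ → ℂ) z := by
    rintro ⟨g, hg1, hg2, hg3⟩
    refine ⟨hg1, hg2, fun z => ?_⟩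
    rw [hcast]
    exact hg3 z
  set Φ : W →ₗ[ℂ] (Fin n → ℂ) :=
    { toFun := fun g => fun i => s8fc (g : ℂ → ℂ) ((i : ℕ) : ℤ)
      map_add' := by
        intro x y
        funext i
        have hx := (hmem x).1
        have hy := (hmem y).1
        simp only [Submodule.coe_add, Pi.add_apply]
        rw [s8fc_add _ _ hx.continuous hy.continuous]
      map_smul' := by
        intro c x
        funext i
        simp only [Submodule.coe_smul, RingHom.id_apply, Pi.smul_apply, smul_eq_mul]
        rw [s8fc_smul] } with hΦ_def
  have hinj : Function.Injective Φ := by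
    rw [injective_iff_map_eq_zero]
    intro g hg0
    obtain ⟨hg1, hg2, hg3⟩ := hmem g
    have hz0 : ∀ j : ℤ, 0 ≤ j → j < n → s8fc (g : ℂ → ℂ) j = 0 := by
      intro j h1 h2
      have := congrFun hg0 ⟨j.toNat, by omega⟩
      simpa [hΦ_def, Int.toNat_of_nonneg h1] using this
    have hall : ∀ q : ℤ, ∀ j : ℤ, 0 ≤ j → j < n → s8fc (g : ℂ → ℂ) (j + q * n) = 0 := by
      intro q
      induction q using Int.induction_on with
      | zero => simpa using hz0
      | succ i ih =>
          intro j h1 h2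
          have hstep := s8_step hτ (g : ℂ → ℂ) hg1 hg2 hg3 (j + i * n)
          rw [ih j h1 h2] at hstep
          have hX : s8fc (g : ℂ → ℂ) (j + i * n + n) = 0 := by
            rcases mul_eq_zero.mp hstep.symm with h | h
            · exact absurd h (Complex.exp_ne_zero _)
            · exact h
          rw [show j + ((i : ℤ) + 1) * n = j + i * n + n by ring]
          exact hX
      | pred i ih =>
          intro j h1 h2
          have hstep := s8_step hτ (g : ℂ → ℂ) hg1 hg2 hg3 (j + (-(i : ℤ) - 1) * n)
          rw [show j + (-(i : ℤ) - 1) * n + n = j + (-(i : ℤ)) * n by ring, ih j h1 h2,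
            mul_zero] at hstep
          exact hstep
    have hZ : ∀ k : ℤ, s8fc (g : ℂ → ℂ) k = 0 := by
      intro k
      have hmod := Int.emod_nonneg k (by exact_mod_cast hn.ne' : ((n : ℕ) : ℤ) ≠ 0)
      have hlt : k % n < n := Int.emod_lt_of_pos k (by exact_mod_cast hn)
      have h1 := hall (k / n) (k % n) hmod hlt
      rwa [show k % n + k / n * n = k by rw [mul_comm]; exact Int.emod_add_mul_ediv k n] at h1
    have : (g : ℂ → ℂ) = 0 := s8_zero_of_fc_zero _ hg1 hg2 hZ
    exact Subtype.ext this
  have hθmem : ∀ j : Fin n, s8theta τ n (j : ℤ) ∈ W := by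
    intro j
    refine ⟨s8_theta_differentiable hτ hn _, s8_theta_periodic _, fun z => ?_⟩
    rw [s8_theta_quasiperiodic, hcast]
  have hΦθ : ∀ j : Fin n, Φ ⟨s8theta τ n (j : ℤ), hθmem j⟩ =
      fun i : Fin n => if i = j
        then Complex.exp (Real.pi * I * τ * ((j : ℕ) : ℂ) ^ 2 / n) else 0 := by
    intro j
    funext i
    have hcalc := s8_fc_theta hτ hn ((j : ℕ) : ℤ) ((i : ℕ) : ℤ)
      (by positivity) (by exact_mod_cast j.2) (by positivity) (by exact_mod_cast i.2)
    have hiff : (((i : ℕ) : ℤ) = ((j : ℕ) : ℤ)) ↔ (i = j) := by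
      constructor
      · intro h
        exact Fin.ext (by exact_mod_cast h)
      · rintro rfl
        rfl
    simp only [hΦ_def, LinearMap.coe_mk, AddHom.coe_mk]
    rw [hcalc]
    by_cases h : i = j
    · rw [if_pos (hiff.mpr h), if_pos h]
      norm_num
    · rw [if_neg (fun hc => h (hiff.mp hc)), if_neg h]
  have hsurj : Function.Surjective Φ := by
    have hsingle : ∀ j : Fin n, (Pi.single j 1 : Fin n → ℂ) ∈ LinearMap.range Φ := by
      intro j
      refine ⟨(Complex.exp (Real.pi * I * τ * ((j : ℕ) : ℂ) ^ 2 / n))⁻¹ •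
        (⟨s8theta τ n (j : ℤ), hθmem j⟩ : W), ?_⟩
      rw [LinearMap.map_smul, hΦθ j]
      funext i
      simp only [Pi.smul_apply, smul_eq_mul]
      by_cases h : i = j
      · subst h
        rw [if_pos rfl, Pi.single_eq_same, inv_mul_cancel₀ (Complex.exp_ne_zero _)]
      · rw [if_neg h, mul_zero, Pi.single_eq_of_ne h]
    rw [← LinearMap.range_eq_top, eq_top_iff]
    intro v _
    have hv : ∑ j : Fin n, v j • (Pi.single j 1 : Fin n → ℂ) = v := by
      have hterm : ∀ j : Fin n, v j • (Pi.single j 1 : Fin n → ℂ) = Pi.single j (v j) := fun j => by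
        rw [← Pi.single_smul, smul_eq_mul, mul_one]
      rw [Finset.sum_congr rfl fun j _ => hterm j, Finset.univ_sum_single]
    rw [← hv]
    exact Submodule.sum_mem _ fun j _ => Submodule.smul_mem _ _ (hsingle j)
  have e : W ≃ₗ[ℂ] (Fin n → ℂ) := LinearEquiv.ofBijective Φ ⟨hinj, hsurj⟩
  rw [e.finrank_eq, Module.finrank_fin_fun]
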